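/- Let 1 ≤ p < ∞, let X₁, …, Xₙ, Y, Z be real Banach spaces, let T : X₁ × ⋯ × Xₙ → Y be a continuous n-linear operator, and let R : Y → Z be a bounded linear operator that is absolutely p-summing with constant C, i.e., for every finite family y₁, …, y_k ∈ Y one has (Σᵢ ‖R(yᵢ)‖^p)^{1/p} ≤ C · sup{ (Σᵢ |y*(yᵢ)|^p)^{1/p} : y* ∈ Y* with ‖y*‖ ≤ 1 }. Then the composition R ∘ T : X₁ × ⋯ × Xₙ → Z is Lipschitz p-summing with constant C · ‖T‖, where ‖T‖ is the norm of T as a continuous n-linear operator. -/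

import Mathlib

open scoped BigOperators

/-- `T` is Lipschitz `p`-summing with constant `c`. -/
def LipschitzPSumming {n : ℕ} {X : Fin n → Type*} [∀ i, NormedAddCommGroup (X i)]
    [∀ i, NormedSpace ℝ (X i)] {Y : Type*} [NormedAddCommGroup Y] [NormedSpace ℝ Y]
    (p c : ℝ) (T : ContinuousMultilinearMap ℝ X Y) : Prop :=
  ∀ (k : ℕ) (u v : Fin k → ((i : Fin n) → X i)),
    (∑ i, ‖T (u i) - T (v i)‖ ^ p) ^ (1 / p) ≤
      c * ⨆ φ : {φ : ContinuousMultilinearMap ℝ X ℝ // ‖φ‖ ≤ 1},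
        (∑ i, |φ.1 (u i) - φ.1 (v i)| ^ p) ^ (1 / p)

/-- A bounded linear operator `R` is absolutely `p`-summing with constant `C`. -/
def AbsolutelyPSumming {Y Z : Type*} [NormedAddCommGroup Y] [NormedSpace ℝ Y]
    [NormedAddCommGroup Z] [NormedSpace ℝ Z] (p C : ℝ) (R : Y →L[ℝ] Z) : Prop :=
  ∀ (k : ℕ) (y : Fin k → Y),
    (∑ i, ‖R (y i)‖ ^ p) ^ (1 / p) ≤
      C * ⨆ f : {f : Y →L[ℝ] ℝ // ‖f‖ ≤ 1},
        (∑ i, |f.1 (y i)| ^ p) ^ (1 / p)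

private lemma bdd_aux {n : ℕ} {X : Fin n → Type*}
    [∀ i, NormedAddCommGroup (X i)] [∀ i, NormedSpace ℝ (X i)]
    (p : ℝ) (hp : 1 ≤ p)
    (k : ℕ) (u v : Fin k → ((i : Fin n) → X i)) :
    BddAbove (Set.range fun φ : {φ : ContinuousMultilinearMap ℝ X ℝ // ‖φ‖ ≤ 1} =>
        (∑ i, |φ.1 (u i) - φ.1 (v i)| ^ p) ^ (1 / p)) := by
  have hp0 : (0:ℝ) < p := lt_of_lt_of_le one_pos hp
  refine ⟨(∑ i, (∏ j, ‖u i j‖ + ∏ j, ‖v i j‖) ^ p) ^ (1 / p), ?_⟩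
  rintro x ⟨φ, rfl⟩
  apply Real.rpow_le_rpow (Finset.sum_nonneg fun i _ =>
    Real.rpow_nonneg (abs_nonneg _) _) ?_ (by positivity)
  refine Finset.sum_le_sum fun i _ => Real.rpow_le_rpow (abs_nonneg _) ?_ hp0.le
  calc |φ.1 (u i) - φ.1 (v i)| ≤ |φ.1 (u i)| + |φ.1 (v i)| := abs_sub _ _
    _ ≤ ∏ j, ‖u i j‖ + ∏ j, ‖v i j‖ := by
        gcongr
        · calc |φ.1 (u i)| ≤ ‖φ.1‖ * ∏ j, ‖u i j‖ := φ.1.le_opNorm _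
            _ ≤ 1 * ∏ j, ‖u i j‖ := by gcongr; exact φ.2
            _ = _ := one_mul _
        · calc |φ.1 (v i)| ≤ ‖φ.1‖ * ∏ j, ‖v i j‖ := φ.1.le_opNorm _
            _ ≤ 1 * ∏ j, ‖v i j‖ := by gcongr; exact φ.2
            _ = _ := one_mul _

/-- The composition of a continuous multilinear operator `T` with an absolutely
`p`-summing linear operator `R` is Lipschitz `p`-summing with constant `C·‖T‖`. -/
theorem absolutelyPSumming_comp_lipschitzPSumming {n : ℕ} {X : Fin n → Type*}
    [∀ i, NormedAddCommGroup (X i)] [∀ i, NormedSpace ℝ (X i)] [∀ i, CompleteSpace (X i)]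
    {Y Z : Type*} [NormedAddCommGroup Y] [NormedSpace ℝ Y] [CompleteSpace Y]
    [NormedAddCommGroup Z] [NormedSpace ℝ Z] [CompleteSpace Z]
    (p : ℝ) (hp : 1 ≤ p) (C : ℝ) (hC : 0 ≤ C)
    (T : ContinuousMultilinearMap ℝ X Y) (R : Y →L[ℝ] Z)
    (hR : AbsolutelyPSumming p C R) :
    LipschitzPSumming p (C * ‖T‖) (R.compContinuousMultilinearMap T) := by
  intro k u v
  have hp0 : (0:ℝ) < p := lt_of_lt_of_le one_pos hp
  set y : Fin k → Y := fun i => T (u i) - T (v i) with hy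
  set S : ℝ := ⨆ φ : {φ : ContinuousMultilinearMap ℝ X ℝ // ‖φ‖ ≤ 1},
      (∑ i, |φ.1 (u i) - φ.1 (v i)| ^ p) ^ (1 / p) with hS
  have hbdd := bdd_aux p hp k u v
  have hSnonneg : 0 ≤ S := by
    have h0 : ((∑ i, |(0 : ContinuousMultilinearMap ℝ X ℝ) (u i) -
        (0 : ContinuousMultilinearMap ℝ X ℝ) (v i)| ^ p) ^ (1 / p) : ℝ) ≤ S := by
      exact le_ciSup hbdd (⟨0, by simp⟩ : {φ : ContinuousMultilinearMap ℝ X ℝ // ‖φ‖ ≤ 1})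
    refine le_trans ?_ h0
    positivity
  have step1 : (∑ i, ‖(R.compContinuousMultilinearMap T) (u i) -
      (R.compContinuousMultilinearMap T) (v i)‖ ^ p) ^ (1 / p)
      = (∑ i, ‖R (y i)‖ ^ p) ^ (1 / p) := by
    simp [hy, map_sub]
  rw [step1]
  refine le_trans (hR k y) ?_
  rw [mul_assoc]
  gcongr
  refine Real.iSup_le (fun f => ?_) (by positivity)
  -- for each f with ‖f‖ ≤ 1, show (∑ |f (y i)|^p)^(1/p) ≤ ‖T‖ * S
  rcases eq_or_lt_of_le (norm_nonneg T) with hT | hT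
  · -- ‖T‖ = 0, so T = 0
    have hT0 : T = 0 := by
      rw [← norm_eq_zero]; exact hT.symm
    have : ∀ i, f.1 (y i) = 0 := by
      intro i; simp [hy, hT0]
    simp only [this, abs_zero, Real.zero_rpow hp0.ne', Finset.sum_const_zero,
      Real.zero_rpow (by positivity : (1/p : ℝ) ≠ 0)]
    rw [← hT, zero_mul]
  · set g : ContinuousMultilinearMap ℝ X ℝ := ‖T‖⁻¹ • (f.1.compContinuousMultilinearMap T) with hg
    have hgnorm : ‖g‖ ≤ 1 := by
      refine le_trans (ContinuousMultilinearMap.opNorm_smul_le _ _) ?_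
      rw [norm_inv, norm_norm]
      calc ‖T‖⁻¹ * ‖f.1.compContinuousMultilinearMap T‖ ≤ ‖T‖⁻¹ * (‖f.1‖ * ‖T‖) := by
            gcongr
            exact ContinuousLinearMap.norm_compContinuousMultilinearMap_le _ _
        _ ≤ ‖T‖⁻¹ * (1 * ‖T‖) := by gcongr; exact f.2
        _ = 1 := by field_simp
    have hval : ∀ i, f.1 (y i) = ‖T‖ * (g (u i) - g (v i)) := by
      intro i
      simp only [hy, hg, map_sub, ContinuousMultilinearMap.smul_apply, smul_eq_mul]
      field_simp
      rfl
    calc (∑ i, |f.1 (y i)| ^ p) ^ (1 / p)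
        = (∑ i, (‖T‖ ^ p) * |g (u i) - g (v i)| ^ p) ^ (1 / p) := by
          congr 1; refine Finset.sum_congr rfl fun i _ => ?_
          rw [hval i, abs_mul, abs_of_nonneg (norm_nonneg T),
            Real.mul_rpow (norm_nonneg T) (abs_nonneg _)]
      _ = (‖T‖ ^ p * ∑ i, |g (u i) - g (v i)| ^ p) ^ (1 / p) := by
          rw [Finset.mul_sum]
      _ = ‖T‖ * (∑ i, |g (u i) - g (v i)| ^ p) ^ (1 / p) := by
          rw [Real.mul_rpow (by positivity) (Finset.sum_nonneg fun i _ =>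
            Real.rpow_nonneg (abs_nonneg _) _), ← Real.rpow_mul (norm_nonneg T),
            mul_one_div, div_self hp0.ne', Real.rpow_one]
      _ ≤ ‖T‖ * S := by
          gcongr
          exact le_ciSup hbdd (⟨g, hgnorm⟩ : {φ : ContinuousMultilinearMap ℝ X ℝ // ‖φ‖ ≤ 1})
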